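/- Let (T, ∧, 𝕀) be a monogenic monoidal triangulated category, and let T′ be a pretriangulated category admitting arbitrary (small) coproducts equipped with a symmetric monoidal structure ∧′ with unit 𝕀′ such that for every object X the functors X ∧′ − and − ∧′ X preserve arbitrary coproducts and are triangulated. Let F : T → T′ be a triangulated functor preserving arbitrary coproducts, equipped with an oplax (comonoidal) structure: a morphism ε : F(𝕀) → 𝕀′ and maps φ_{A,B} : F(A ∧ B) → F(A) ∧′ F(B), natural in A and B, compatible with the shift in each variable, and satisfying the coherence diagrams. If φ_{𝕀,B} : F(𝕀 ∧ B) → F(𝕀) ∧′ F(B) is an isomorphism for every object B of T, then φ_{A,B} is an isomorphism for all objects A and B of T. -/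

import Mathlib

/-!
STATEMENT 6: Let `(T, ∧, 𝕀)` be a monogenic monoidal triangulated category and `T′` a
pretriangulated category with arbitrary coproducts equipped with a bi-exact symmetric
monoidal structure `∧′` with unit `𝕀′`.  Let `F : T → T′` be a triangulated functor
preserving arbitrary coproducts, equipped with an oplax (comonoidal) structure
`ε : F 𝕀 ⟶ 𝕀′`, `φ A B : F (A ∧ B) ⟶ F A ∧′ F B` natural in both variables, compatible
with the shift in each variable and satisfying the coherence diagrams.  If `φ 𝕀 B` is an
isomorphism for every `B`, then `φ A B` is an isomorphism for all `A` and `B`.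
-/

open CategoryTheory Category Limits Pretriangulated MonoidalCategory

universe v u

namespace Paper

variable {C : Type u} [Category.{v} C]

/-- The canonical map `⊕ᵢ Hom(G, Aᵢ) →+ Hom(G, ∐ᵢ Aᵢ)`. -/
noncomputable def coproductComparison [Preadditive C] (G : C) {ι : Type v} (A : ι → C)
    [HasCoproduct A] : DirectSum ι (fun i => G ⟶ A i) →+ (G ⟶ ∐ A) :=
  letI := Classical.decEq ι
  DirectSum.toAddMonoid fun i =>
    AddMonoidHom.mk' (fun g => g ≫ Sigma.ι A i) fun _ _ => Preadditive.add_comp _ _ _ _ _ _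

/-- An object `G` is small if for every family of objects admitting a coproduct, the
canonical map `⊕ᵢ Hom(G, Aᵢ) → Hom(G, ∐ᵢ Aᵢ)` is an isomorphism (bijective). -/
def IsSmallObject [Preadditive C] (G : C) : Prop :=
  ∀ ⦃ι : Type v⦄ (A : ι → C) [HasCoproduct A], Function.Bijective (coproductComparison G A)

/-- An object `G` is a weak generator if a map `f : X ⟶ Y` is an isomorphism exactly when
`Hom(G⟦n⟧, X) → Hom(G⟦n⟧, Y)` is bijective for all integers `n`. -/
def IsWeakGenerator [HasShift C ℤ] (G : C) : Prop :=
  ∀ ⦃X Y : C⦄ (f : X ⟶ Y),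
    IsIso f ↔ ∀ n : ℤ, Function.Bijective fun g : G⟦n⟧ ⟶ X => g ≫ f

end Paper

namespace Paper

variable {C : Type u} [Category.{v} C]

section Prelim

variable [Preadditive C]

lemma coproductComparison_of (G : C) {ι : Type v} [inst : DecidableEq ι] (A : ι → C)
    [HasCoproduct A] (i : ι) (g : G ⟶ A i) :
    coproductComparison G A (DirectSum.of (fun i => G ⟶ A i) i g) = g ≫ Sigma.ι A i := by
  have h : inst = Classical.decEq ι := by
    funext a b
    exact Subsingleton.elim _ _
  subst h
  simpa [coproductComparison] using DirectSum.toAddMonoid_of _ i g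

lemma isSmallObject_shift [HasShift C ℤ] [∀ n : ℤ, (shiftFunctor C n).Additive]
    [HasCoproducts.{v} C] {G : C} (hG : IsSmallObject G) (n : ℤ) :
    IsSmallObject (G⟦n⟧ : C) := by
  intro ι A _
  letI := Classical.decEq ι
  set I : C ⥤ C := shiftFunctor C (-n) with hI
  let adj : shiftFunctor C n ⊣ I := (shiftEquiv C n).toAdjunction
  let e : ∀ X : C, ((G⟦n⟧ : C) ⟶ X) ≃ (G ⟶ I.obj X) := fun X => adj.homEquiv G X
  have he : ∀ (X : C) (f : (G⟦n⟧ : C) ⟶ X), e X f = adj.unit.app G ≫ I.map f := by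
    intro X f; exact adj.homEquiv_unit G X f
  have headd : ∀ (X : C) (f g : (G⟦n⟧ : C) ⟶ X), e X (f + g) = e X f + e X g := by
    intro X f g
    simp [he, Functor.map_add, Preadditive.comp_add]
  -- τ and its inverse
  let τ : DirectSum ι (fun i => ((G⟦n⟧ : C) ⟶ A i)) →+ DirectSum ι (fun i => G ⟶ I.obj (A i)) :=
    DirectSum.toAddMonoid fun i =>
      (DirectSum.of (fun i => G ⟶ I.obj (A i)) i).comp
        (AddMonoidHom.mk' (e (A i)) (headd (A i)))
  let τ' : DirectSum ι (fun i => G ⟶ I.obj (A i)) →+ DirectSum ι (fun i => ((G⟦n⟧ : C) ⟶ A i)) :=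
    DirectSum.toAddMonoid fun i =>
      (DirectSum.of (fun i => ((G⟦n⟧ : C) ⟶ A i)) i).comp
        (AddMonoidHom.mk' ((e (A i)).symm) (by
          intro f g
          apply (e (A i)).injective
          simp [headd]))
  have hττ' : ∀ x, τ' (τ x) = x := by
    intro x
    have : τ'.comp τ = AddMonoidHom.id _ := by
      apply DirectSum.addHom_ext
      intro i y
      simp [τ, τ', DirectSum.toAddMonoid_of]
    calc τ' (τ x) = τ'.comp τ x := rfl
    _ = x := by rw [this]; rfl
  have hτ'τ : ∀ x, τ (τ' x) = x := by
    intro x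
    have : τ.comp τ' = AddMonoidHom.id _ := by
      apply DirectSum.addHom_ext
      intro i y
      simp [τ, τ', DirectSum.toAddMonoid_of]
    calc τ (τ' x) = τ.comp τ' x := rfl
    _ = x := by rw [this]; rfl
  have hτ : Function.Bijective τ :=
    Function.bijective_iff_has_inverse.2 ⟨τ', hττ', hτ'τ⟩
  -- the comparison square
  have key : ∀ x, coproductComparison (G⟦n⟧ : C) A x =
      (e (∐ A)).symm ((coproductComparison G (fun i => I.obj (A i)) (τ x)) ≫
        sigmaComparison I A) := by
    intro x
    refine DirectSum.induction_on x ?_ ?_ ?_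
    · rw [map_zero, map_zero, map_zero, Limits.zero_comp]
      apply (e (∐ A)).injective
      rw [Equiv.apply_symm_apply, he]
      simp
    · intro i g
      apply (e (∐ A)).injective
      rw [Equiv.apply_symm_apply]
      have h1 : coproductComparison (G⟦n⟧ : C) A (DirectSum.of _ i g) = g ≫ Sigma.ι A i :=
        coproductComparison_of _ _ _ _
      have h2 : τ (DirectSum.of _ i g) = DirectSum.of _ i (e (A i) g) := by
        simp [τ, DirectSum.toAddMonoid_of]
      rw [h1, h2, coproductComparison_of, he, he, I.map_comp]
      simp only [Category.assoc]
      rw [← ι_comp_sigmaComparison I A i]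
    · intro x y hx hy
      rw [map_add, map_add, hx, hy, map_add, Preadditive.add_comp]
      apply (e (∐ A)).injective
      rw [Equiv.apply_symm_apply, headd, Equiv.apply_symm_apply, Equiv.apply_symm_apply]
  have hpost : Function.Bijective (fun y : G ⟶ ∐ (fun i => I.obj (A i)) => y ≫ sigmaComparison I A) := by
    refine Function.bijective_iff_has_inverse.2 ⟨fun y => y ≫ inv (sigmaComparison I A), ?_, ?_⟩
    · intro y; simp
    · intro y; simp
  have : Function.Bijective (fun x => (e (∐ A)).symm
      ((coproductComparison G (fun i => I.obj (A i)) (τ x)) ≫ sigmaComparison I A)) := by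
    exact (e (∐ A)).symm.bijective.comp (hpost.comp ((hG (fun i => I.obj (A i))).comp hτ))
  have hfun : (fun x => coproductComparison (G⟦n⟧ : C) A x) = (fun x => (e (∐ A)).symm
      ((coproductComparison G (fun i => I.obj (A i)) (τ x)) ≫ sigmaComparison I A)) :=
    funext key
  rw [show (⇑(coproductComparison (G⟦n⟧ : C) A)) = _ from hfun]
  exact this

end Prelim

section Engine

variable [Preadditive C] [HasCoproducts.{v} C]

/-- On a coproduct indexed by `ULift ℕ`, a map `g` with `g ≫ (𝟙 - s) = 0`, where `s` is the
"shift by transition maps" endomorphism, is zero, provided the source is small. -/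
lemma cancel_one_sub_shift {Y : ULift.{v} ℕ → C} (j : ∀ i : ℕ, Y ⟨i⟩ ⟶ Y ⟨i + 1⟩) (G' : C)
    (hsm : Function.Bijective (coproductComparison G' Y))
    (g : G' ⟶ ∐ Y)
    (hg : g ≫ (𝟙 _ - Limits.Sigma.desc (fun i : ULift.{v} ℕ =>
      j i.down ≫ Limits.Sigma.ι Y ⟨i.down + 1⟩)) = 0) :
    g = 0 := by
  letI := Classical.decEq (ULift.{v} ℕ)
  set s : ∐ Y ⟶ ∐ Y :=
    Limits.Sigma.desc (fun i : ULift.{v} ℕ => j i.down ≫ Limits.Sigma.ι Y ⟨i.down + 1⟩) with hs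
  obtain ⟨x, hx⟩ := hsm.2 g
  set cmp := coproductComparison G' Y with hcmp
  -- the algebraic shift
  set σ : DirectSum (ULift.{v} ℕ) (fun i => G' ⟶ Y i) →+
      DirectSum (ULift.{v} ℕ) (fun i => G' ⟶ Y i) :=
    DirectSum.toAddMonoid (fun i =>
      (DirectSum.of (fun i : ULift.{v} ℕ => G' ⟶ Y i) ⟨i.down + 1⟩).comp
        (AddMonoidHom.mk' (fun f => f ≫ j i.down)
          (fun _ _ => Preadditive.add_comp _ _ _ _ _ _))) with hσ
  have hcommσ : ∀ y, cmp (σ y) = cmp y ≫ s := by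
    intro y
    refine DirectSum.induction_on y ?_ ?_ ?_
    · simp
    · intro i f
      rw [hσ]
      rw [DirectSum.toAddMonoid_of]
      have h1 : cmp (DirectSum.of _ i f) = f ≫ Sigma.ι Y i := coproductComparison_of _ _ _ _
      have h2 : cmp ((DirectSum.of (fun i : ULift.{v} ℕ => G' ⟶ Y i) ⟨i.down + 1⟩)
          (f ≫ j i.down)) = (f ≫ j i.down) ≫ Sigma.ι Y ⟨i.down + 1⟩ :=
        coproductComparison_of _ _ _ _
      rw [AddMonoidHom.comp_apply]
      rw [show (AddMonoidHom.mk' (fun f : G' ⟶ Y i => f ≫ j i.down)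
        (fun _ _ => Preadditive.add_comp _ _ _ _ _ _)) f = f ≫ j i.down from rfl]
      rw [h2, h1, hs]
      simp
    · intro a b ha hb
      rw [map_add, map_add, map_add, ha, hb, Preadditive.add_comp]
  have hxσ : x = σ x := by
    apply hsm.1
    have h1 : g ≫ (𝟙 _ - s) = 0 := hg
    rw [Preadditive.comp_sub, Category.comp_id, sub_eq_zero] at h1
    rw [hcommσ, hx, ← h1]
  -- components of σ
  have hσ0 : ∀ y, (σ y) (⟨0⟩ : ULift.{v} ℕ) = 0 := by
    intro y
    refine DirectSum.induction_on y ?_ ?_ ?_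
    · simp
    · intro i f
      rw [hσ, DirectSum.toAddMonoid_of, AddMonoidHom.comp_apply]
      refine DirectSum.of_eq_of_ne _ _ _ ?_
      intro h
      exact Nat.succ_ne_zero i.down (congrArg ULift.down h).symm
    · intro a b ha hb
      rw [map_add, DirectSum.add_apply, ha, hb, add_zero]
  have hσsucc : ∀ (y) (k : ℕ), (σ y) (⟨k + 1⟩ : ULift.{v} ℕ) = (y ⟨k⟩) ≫ j k := by
    intro y k
    refine DirectSum.induction_on y ?_ ?_ ?_
    · simp
    · intro i f
      rw [hσ, DirectSum.toAddMonoid_of, AddMonoidHom.comp_apply]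
      by_cases h : i.down = k
      · obtain ⟨i⟩ := i
        subst h
        rw [DirectSum.of_eq_same, DirectSum.of_eq_same]
        rfl
      · have e1 : (⟨i.down + 1⟩ : ULift.{v} ℕ) ≠ ⟨k + 1⟩ := by
          intro hh; exact h (Nat.succ_injective (congrArg ULift.down hh))
        have e2 : i ≠ (⟨k⟩ : ULift.{v} ℕ) := by
          intro hh; exact h (congrArg ULift.down hh)
        rw [DirectSum.of_eq_of_ne _ _ _ e1.symm, DirectSum.of_eq_of_ne _ _ _ e2.symm, Limits.zero_comp]
    · intro a b ha hb
      rw [map_add, DirectSum.add_apply, DirectSum.add_apply, ha, hb, Preadditive.add_comp]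
  have hzero : ∀ k : ℕ, x (⟨k⟩ : ULift.{v} ℕ) = 0 := by
    intro k
    induction k with
    | zero => rw [hxσ]; exact hσ0 x
    | succ k ih =>
      conv_lhs => rw [hxσ]
      rw [hσsucc, ih, Limits.zero_comp]
  have hx0 : x = 0 := by
    apply DFinsupp.ext
    intro i
    obtain ⟨k⟩ := i
    exact hzero k
  rw [← hx, hx0]
  exact map_zero _


/-- The generation engine: a predicate closed under isomorphism, coproducts and triangles,
holding on all shifts of a small weak generator, holds everywhere. -/
theorem generation [HasZeroObject C] [HasShift C ℤ]
    [∀ n : ℤ, (shiftFunctor C n).Additive] [Pretriangulated C]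
    (G : C) (hsmall : IsSmallObject G) (hgen : IsWeakGenerator G)
    (P : C → Prop)
    (hPiso : ∀ {X Y : C}, (X ≅ Y) → P X → P Y)
    (hPshift : ∀ n : ℤ, P ((G⟦n⟧ : C)))
    (hPcoprod : ∀ {ι : Type v} (A : ι → C) [HasCoproduct A], (∀ i, P (A i)) → P (∐ A))
    (hPtri : ∀ (T : Triangle C), (T ∈ distTriang C) → P T.obj₁ → P T.obj₂ → P T.obj₃)
    (X : C) : P X := by
  classical
  -- Step construction
  have hstep : ∀ (Y : C) (u : Y ⟶ X), P Y → ∃ (Y' : C) (jm : Y ⟶ Y') (u' : Y' ⟶ X),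
      P Y' ∧ jm ≫ u' = u ∧ ∀ (n : ℤ) (g : (G⟦n⟧ : C) ⟶ Y), g ≫ u = 0 → g ≫ jm = 0 := by
    intro Y u hPY
    let κ : Type v := Σ n : ℤ, {g : (G⟦n⟧ : C) ⟶ Y // g ≫ u = 0}
    let k : (∐ (fun p : κ => (G⟦p.1⟧ : C))) ⟶ Y := Limits.Sigma.desc (fun p => p.2.1)
    obtain ⟨Y', jm, δ, hT⟩ := Pretriangulated.distinguished_cocone_triangle k
    have hk : k ≫ u = 0 := by
      apply Limits.Sigma.hom_ext
      intro p
      rw [← Category.assoc, Limits.Sigma.ι_desc, Limits.comp_zero]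
      exact p.2.2
    obtain ⟨u', hu'⟩ := Triangle.yoneda_exact₂ _ hT u hk
    refine ⟨Y', jm, u', hPtri _ hT (hPcoprod _ (fun p => hPshift p.1)) hPY, hu'.symm, ?_⟩
    intro n g hgu
    have hgk : Limits.Sigma.ι (fun p : κ => (G⟦p.1⟧ : C)) ⟨n, g, hgu⟩ ≫ k = g :=
      Limits.Sigma.ι_desc _ _
    have hkj : k ≫ jm = 0 := comp_distTriang_mor_zero₁₂ _ hT
    rw [← hgk, Category.assoc, hkj, Limits.comp_zero]
  choose Yn jn un hPn hcn hkn using hstep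
  -- base of the tower
  let κ₀ : Type v := Σ n : ℤ, ((G⟦n⟧ : C) ⟶ X)
  let Y₀ : C := ∐ (fun p : κ₀ => (G⟦p.1⟧ : C))
  let u₀ : Y₀ ⟶ X := Limits.Sigma.desc (fun p => p.2)
  have hP₀ : P Y₀ := hPcoprod _ (fun p => hPshift p.1)
  -- the tower
  let T : ℕ → Σ' (Y : C) (u : Y ⟶ X), P Y := fun i =>
    Nat.rec ⟨Y₀, u₀, hP₀⟩
      (fun _ q => ⟨Yn q.1 q.2.1 q.2.2, un q.1 q.2.1 q.2.2, hPn q.1 q.2.1 q.2.2⟩) i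
  let Ys : ℕ → C := fun i => (T i).1
  let us : ∀ i, Ys i ⟶ X := fun i => (T i).2.1
  have hPs : ∀ i, P (Ys i) := fun i => (T i).2.2
  let js : ∀ i, Ys i ⟶ Ys (i + 1) := fun i => jn (T i).1 (T i).2.1 (T i).2.2
  have hcomm : ∀ i, js i ≫ us (i + 1) = us i := fun i => hcn (T i).1 (T i).2.1 (T i).2.2
  have hker : ∀ (i) (n : ℤ) (g : (G⟦n⟧ : C) ⟶ Ys i), g ≫ us i = 0 → g ≫ js i = 0 :=
    fun i => hkn (T i).1 (T i).2.1 (T i).2.2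
  -- homotopy colimit
  let famY : ULift.{v} ℕ → C := fun i => Ys i.down
  let s : ∐ famY ⟶ ∐ famY :=
    Limits.Sigma.desc (fun i : ULift.{v} ℕ => js i.down ≫ Limits.Sigma.ι famY ⟨i.down + 1⟩)
  obtain ⟨Z, p, δ, hT⟩ := Pretriangulated.distinguished_cocone_triangle (𝟙 (∐ famY) - s)
  have hPZ : P Z :=
    hPtri _ hT (hPcoprod famY (fun i => hPs i.down)) (hPcoprod famY (fun i => hPs i.down))
  let uu : (∐ famY) ⟶ X := Limits.Sigma.desc (fun i : ULift.{v} ℕ => us i.down)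
  have h0 : (𝟙 (∐ famY) - s) ≫ uu = 0 := by
    apply Limits.Sigma.hom_ext
    intro i
    rw [← Category.assoc, Limits.comp_zero, Preadditive.comp_sub, Category.comp_id,
      Limits.Sigma.ι_desc, Preadditive.sub_comp, Limits.Sigma.ι_desc, Category.assoc,
      Limits.Sigma.ι_desc]
    rw [show us (⟨i.down + 1⟩ : ULift.{v} ℕ).down = us (i.down + 1) from rfl, hcomm, sub_self]
  obtain ⟨v, hv⟩ : ∃ v : Z ⟶ X, uu = p ≫ v := Triangle.yoneda_exact₂ _ hT uu h0
  -- the step identity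
  have hstepid : ∀ N : ℕ,
      Limits.Sigma.ι famY ⟨N⟩ ≫ p = js N ≫ Limits.Sigma.ι famY ⟨N + 1⟩ ≫ p := by
    intro N
    have h1 : (𝟙 (∐ famY) - s) ≫ p = 0 := comp_distTriang_mor_zero₁₂ _ hT
    rw [Preadditive.sub_comp, Category.id_comp, sub_eq_zero] at h1
    calc Limits.Sigma.ι famY ⟨N⟩ ≫ p = Limits.Sigma.ι famY ⟨N⟩ ≫ s ≫ p := by rw [← h1]
    _ = (Limits.Sigma.ι famY ⟨N⟩ ≫ s) ≫ p := (Category.assoc _ _ _).symm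
    _ = (js N ≫ Limits.Sigma.ι famY ⟨N + 1⟩) ≫ p := by rw [Limits.Sigma.ι_desc]
    _ = js N ≫ Limits.Sigma.ι famY ⟨N + 1⟩ ≫ p := Category.assoc _ _ _
  suffices hIso : IsIso v by exact hPiso (asIso v) hPZ
  rw [hgen v]
  intro n
  have hsmY : Function.Bijective (coproductComparison (G⟦n⟧ : C) famY) :=
    isSmallObject_shift hsmall n famY
  constructor
  · -- injectivity
    have hker0 : ∀ g : (G⟦n⟧ : C) ⟶ Z, g ≫ v = 0 → g = 0 := by
      intro g hgv
      -- first, g ≫ δ = 0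
      let E := shiftFunctor C (1 : ℤ)
      let fam1 : ULift.{v} ℕ → C := fun i => E.obj (famY i)
      have hsm1 : Function.Bijective (coproductComparison (G⟦n⟧ : C) fam1) :=
        isSmallObject_shift hsmall n fam1
      let c : (∐ fam1) ⟶ E.obj (∐ famY) := sigmaComparison E famY
      let s₁ : (∐ fam1) ⟶ ∐ fam1 := Limits.Sigma.desc (fun i : ULift.{v} ℕ =>
        E.map (js i.down) ≫ Limits.Sigma.ι fam1 ⟨i.down + 1⟩)
      have hconj : c ≫ E.map (𝟙 (∐ famY) - s) = (𝟙 (∐ fam1) - s₁) ≫ c := by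
        apply Limits.Sigma.hom_ext
        intro i
        have hLHS : Limits.Sigma.ι fam1 i ≫ c ≫ E.map (𝟙 (∐ famY) - s)
            = E.map (Limits.Sigma.ι famY i) -
              E.map (js i.down) ≫ E.map (Limits.Sigma.ι famY ⟨i.down + 1⟩) := by
          rw [← Category.assoc, ι_comp_sigmaComparison, ← E.map_comp, Preadditive.comp_sub,
            Category.comp_id, Limits.Sigma.ι_desc, E.map_sub, E.map_comp]
        have hRHS : Limits.Sigma.ι fam1 i ≫ (𝟙 (∐ fam1) - s₁) ≫ c
            = E.map (Limits.Sigma.ι famY i) -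
              E.map (js i.down) ≫ E.map (Limits.Sigma.ι famY ⟨i.down + 1⟩) := by
          rw [← Category.assoc, Preadditive.comp_sub, Category.comp_id, Limits.Sigma.ι_desc,
            Preadditive.sub_comp, ι_comp_sigmaComparison, Category.assoc, ι_comp_sigmaComparison]
        rw [hLHS, hRHS]
      have hδ : g ≫ δ = 0 := by
        have h31 : δ ≫ E.map (𝟙 (∐ famY) - s) = 0 := comp_distTriang_mor_zero₃₁ _ hT
        have hinv : inv c ≫ (𝟙 (∐ fam1) - s₁) = E.map (𝟙 (∐ famY) - s) ≫ inv c := by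
          rw [IsIso.inv_comp_eq]
          rw [← Category.assoc, hconj, Category.assoc, IsIso.hom_inv_id, Category.comp_id]
        have hzero : (g ≫ δ ≫ inv c) ≫ (𝟙 (∐ fam1) - s₁) = 0 := by
          rw [Category.assoc, Category.assoc, hinv, ← Category.assoc δ, h31,
            Limits.zero_comp, Limits.comp_zero]
        have hv0 : g ≫ δ ≫ inv c = 0 :=
          cancel_one_sub_shift (Y := fam1) (fun i => E.map (js i)) (G⟦n⟧ : C) hsm1 _ hzero
        have : (g ≫ δ ≫ inv c) ≫ c = 0 := by rw [hv0, Limits.zero_comp]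
        simpa using this
      obtain ⟨h', hh'⟩ : ∃ h' : (G⟦n⟧ : C) ⟶ ∐ famY, g = h' ≫ p :=
        Triangle.coyoneda_exact₃ _ hT g hδ
      obtain ⟨x, hx⟩ := hsmY.2 h'
      -- pushing up the tower
      have bump : ∀ (N M : ℕ), N ≤ M → ∀ w : (G⟦n⟧ : C) ⟶ Ys N,
          ∃ w' : (G⟦n⟧ : C) ⟶ Ys M,
            w ≫ Limits.Sigma.ι famY ⟨N⟩ ≫ p = w' ≫ Limits.Sigma.ι famY ⟨M⟩ ≫ p ∧
            w ≫ us N = w' ≫ us M := by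
        intro N M hNM
        induction M, hNM using Nat.le_induction with
        | base => exact fun w => ⟨w, rfl, rfl⟩
        | succ M hM ih =>
          intro w
          obtain ⟨w', h1, h2⟩ := ih w
          refine ⟨w' ≫ js M, ?_, ?_⟩
          · rw [h1, hstepid M, Category.assoc]
          · rw [h2, ← hcomm M, Category.assoc]
      have push : ∀ x : DirectSum (ULift.{v} ℕ) (fun i => ((G⟦n⟧ : C) ⟶ famY i)),
          ∃ (N : ℕ) (w : (G⟦n⟧ : C) ⟶ Ys N),
            coproductComparison _ famY x ≫ p = w ≫ Limits.Sigma.ι famY ⟨N⟩ ≫ p ∧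
            coproductComparison _ famY x ≫ uu = w ≫ us N := by
        intro y
        refine DirectSum.induction_on y ?_ ?_ ?_
        · exact ⟨0, 0, by simp, by simp⟩
        · intro i f
          refine ⟨i.down, f, ?_, ?_⟩
          · rw [coproductComparison_of, Category.assoc]
          · rw [coproductComparison_of, Category.assoc, Limits.Sigma.ι_desc]
        · rintro a b ⟨N₁, w₁, e₁, f₁⟩ ⟨N₂, w₂, e₂, f₂⟩
          obtain ⟨w₁', e₁', f₁'⟩ := bump N₁ (max N₁ N₂) (le_max_left _ _) w₁
          obtain ⟨w₂', e₂', f₂'⟩ := bump N₂ (max N₁ N₂) (le_max_right _ _) w₂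
          refine ⟨max N₁ N₂, w₁' + w₂', ?_, ?_⟩
          · rw [map_add, Preadditive.add_comp, e₁, e₂, e₁', e₂', Preadditive.add_comp]
          · rw [map_add, Preadditive.add_comp, f₁, f₂, f₁', f₂', Preadditive.add_comp]
      obtain ⟨N, w, hp1, hp2⟩ := push x
      have hw0 : w ≫ us N = 0 := by
        rw [← hp2, hx, hv, ← Category.assoc, ← hh', hgv]
      have hwj : w ≫ js N = 0 := hker N n w hw0
      rw [hh', ← hx, hp1, hstepid N, ← Category.assoc, hwj, Limits.zero_comp]
    intro a b hab
    have h1 : (a - b) ≫ v = 0 := by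
      rw [Preadditive.sub_comp]
      have : a ≫ v = b ≫ v := hab
      rw [this, sub_self]
    have := hker0 _ h1
    exact sub_eq_zero.1 this
  · -- surjectivity
    intro g
    refine ⟨Limits.Sigma.ι (fun q : κ₀ => (G⟦q.1⟧ : C)) ⟨n, g⟩ ≫ Limits.Sigma.ι famY ⟨0⟩ ≫ p, ?_⟩
    show (Limits.Sigma.ι (fun q : κ₀ => (G⟦q.1⟧ : C)) ⟨n, g⟩ ≫ Limits.Sigma.ι famY ⟨0⟩ ≫ p) ≫ v = g
    rw [Category.assoc, Category.assoc, ← hv]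
    rw [show Limits.Sigma.ι famY ⟨0⟩ ≫ uu = us 0 from Limits.Sigma.ι_desc _ _]
    exact Limits.Sigma.ι_desc _ _


end Engine

end Paper


open Paper

theorem statement_6
    -- `T` is a monogenic monoidal triangulated category:
    {C : Type u} [Category.{v} C] [HasZeroObject C] [HasShift C ℤ] [Preadditive C]
    [∀ n : ℤ, (shiftFunctor C n).Additive] [Pretriangulated C] [HasCoproducts.{v} C]
    [MonoidalCategory C] [SymmetricCategory C]
    [∀ X : C, (tensorLeft X).Additive] [∀ X : C, (tensorRight X).Additive]
    [∀ X : C, (tensorLeft X).CommShift ℤ] [∀ X : C, (tensorRight X).CommShift ℤ]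
    [∀ X : C, (tensorLeft X).IsTriangulated] [∀ X : C, (tensorRight X).IsTriangulated]
    (hCtensorL : ∀ (X : C) (ι : Type v), PreservesColimitsOfShape (Discrete ι) (tensorLeft X))
    (hCtensorR : ∀ (X : C) (ι : Type v), PreservesColimitsOfShape (Discrete ι) (tensorRight X))
    (hCunit_small : IsSmallObject (𝟙_ C)) (hCunit_gen : IsWeakGenerator (𝟙_ C))
    -- `T′` is a pretriangulated category with a bi-exact symmetric monoidal structure:
    {D : Type u} [Category.{v} D] [HasZeroObject D] [HasShift D ℤ] [Preadditive D]
    [∀ n : ℤ, (shiftFunctor D n).Additive] [Pretriangulated D] [HasCoproducts.{v} D]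
    [MonoidalCategory D] [SymmetricCategory D]
    [∀ X : D, (tensorLeft X).Additive] [∀ X : D, (tensorRight X).Additive]
    [∀ X : D, (tensorLeft X).CommShift ℤ] [∀ X : D, (tensorRight X).CommShift ℤ]
    [∀ X : D, (tensorLeft X).IsTriangulated] [∀ X : D, (tensorRight X).IsTriangulated]
    (hDtensorL : ∀ (X : D) (ι : Type v), PreservesColimitsOfShape (Discrete ι) (tensorLeft X))
    (hDtensorR : ∀ (X : D) (ι : Type v), PreservesColimitsOfShape (Discrete ι) (tensorRight X))
    -- `F` is a triangulated functor preserving arbitrary coproducts: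
    (F : C ⥤ D) [F.Additive] [F.CommShift ℤ] [F.IsTriangulated]
    (hF : ∀ ι : Type v, PreservesColimitsOfShape (Discrete ι) F)
    -- the oplax (comonoidal) structure on `F`:
    (ε : F.obj (𝟙_ C) ⟶ 𝟙_ D)
    (φ : ∀ A B : C, F.obj (A ⊗ B) ⟶ F.obj A ⊗ F.obj B)
    (hφ_nat : ∀ {A A' B B' : C} (f : A ⟶ A') (g : B ⟶ B'),
      F.map (f ⊗ₘ g) ≫ φ A' B' = φ A B ≫ (F.map f ⊗ₘ F.map g))
    -- compatibility of `φ` with the shift in the second variable: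
    (hφ_shift₂ : ∀ (n : ℤ) (A B : C),
      φ A (B⟦n⟧) ≫ (F.obj A ◁ (F.commShiftIso n).hom.app B) ≫
          ((tensorLeft (F.obj A)).commShiftIso n).hom.app (F.obj B) =
        F.map (((tensorLeft A).commShiftIso n).hom.app B) ≫
          (F.commShiftIso n).hom.app (A ⊗ B) ≫ (φ A B)⟦n⟧')
    -- compatibility of `φ` with the shift in the first variable:
    (hφ_shift₁ : ∀ (n : ℤ) (A B : C),
      φ (A⟦n⟧) B ≫ ((F.commShiftIso n).hom.app A ▷ F.obj B) ≫
          ((tensorRight (F.obj B)).commShiftIso n).hom.app (F.obj A) =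
        F.map (((tensorRight B).commShiftIso n).hom.app A) ≫
          (F.commShiftIso n).hom.app (A ⊗ B) ≫ (φ A B)⟦n⟧')
    -- the coherence diagrams of an oplax (symmetric) comonoidal functor:
    (hφ_assoc : ∀ A B Z : C,
      φ (A ⊗ B) Z ≫ (φ A B ⊗ₘ 𝟙 (F.obj Z)) ≫ (α_ (F.obj A) (F.obj B) (F.obj Z)).hom =
        F.map (α_ A B Z).hom ≫ φ A (B ⊗ Z) ≫ (𝟙 (F.obj A) ⊗ₘ φ B Z))
    (hφ_left_unit : ∀ A : C,
      φ (𝟙_ C) A ≫ (ε ⊗ₘ 𝟙 (F.obj A)) ≫ (λ_ (F.obj A)).hom = F.map (λ_ A).hom)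
    (hφ_right_unit : ∀ A : C,
      φ A (𝟙_ C) ≫ (𝟙 (F.obj A) ⊗ₘ ε) ≫ (ρ_ (F.obj A)).hom = F.map (ρ_ A).hom)
    (hφ_braided : ∀ A B : C,
      F.map (β_ A B).hom ≫ φ B A = φ A B ≫ (β_ (F.obj A) (F.obj B)).hom)
    -- `φ 𝕀 B` is an isomorphism for every `B`:
    (hφ_unit : ∀ B : C, IsIso (φ (𝟙_ C) B)) :
    ∀ A B : C, IsIso (φ A B) := by
  intro A B
  have hc₁ : ∀ {A A' : C} (f : A ⟶ A'),
      F.map (f ▷ B) ≫ φ A' B = φ A B ≫ (F.map f ▷ F.obj B) := by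
    intro A A' f
    have hnat := hφ_nat f (𝟙 B)
    rw [CategoryTheory.Functor.map_id] at hnat
    rw [tensorHom_id, tensorHom_id] at hnat
    exact hnat
  refine Paper.generation (𝟙_ C) hCunit_small hCunit_gen (fun A => IsIso (φ A B))
    ?_ ?_ ?_ ?_ A
  · -- closed under isomorphism
    intro X Y e hX
    haveI := hX
    have hnat := hc₁ (A := X) (A' := Y) e.hom
    haveI : IsIso (F.map (e.hom ▷ B)) := inferInstance
    have h2 : φ Y B = inv (F.map (e.hom ▷ B)) ≫ φ X B ≫ (F.map e.hom ▷ F.obj B) := by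
      rw [← hnat, IsIso.inv_hom_id_assoc]
    rw [h2]
    infer_instance
  · -- shifts of the unit
    intro n
    have h := hφ_shift₁ n (𝟙_ C) B
    haveI := hφ_unit B
    have h2 : φ ((𝟙_ C)⟦n⟧) B = (F.map (((tensorRight B).commShiftIso n).hom.app (𝟙_ C)) ≫
        (F.commShiftIso n).hom.app ((𝟙_ C) ⊗ B) ≫ (φ (𝟙_ C) B)⟦n⟧') ≫
        inv (((tensorRight (F.obj B)).commShiftIso n).hom.app (F.obj (𝟙_ C))) ≫
        inv ((F.commShiftIso n).hom.app (𝟙_ C) ▷ F.obj B) := by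
      rw [← h]
      simp only [Category.assoc, IsIso.hom_inv_id, Category.comp_id, IsIso.hom_inv_id_assoc]
    rw [h2]
    infer_instance
  · -- coproducts
    intro ι A' inst hA
    haveI : PreservesColimitsOfShape (Discrete ι) (tensorRight B) := hCtensorR B ι
    haveI : PreservesColimitsOfShape (Discrete ι) F := hF ι
    haveI : PreservesColimitsOfShape (Discrete ι) (tensorRight (F.obj B)) := hDtensorR (F.obj B) ι
    haveI : ∀ i, IsIso (φ (A' i) B) := hA
    let K₁ : C ⥤ D := tensorRight B ⋙ F
    let K₂ : C ⥤ D := F ⋙ tensorRight (F.obj B)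
    let sm : (∐ fun i => K₁.obj (A' i)) ⟶ (∐ fun i => K₂.obj (A' i)) :=
      Limits.Sigma.map (f := fun i => K₁.obj (A' i)) (g := fun i => K₂.obj (A' i))
        (fun i => φ (A' i) B)
    have hsq : sigmaComparison K₁ A' ≫ φ (∐ A') B = sm ≫ sigmaComparison K₂ A' := by
      apply Limits.Sigma.hom_ext
      intro i
      calc Limits.Sigma.ι (fun i => K₁.obj (A' i)) i ≫ sigmaComparison K₁ A' ≫ φ (∐ A') B
          = F.map ((Limits.Sigma.ι A' i) ▷ B) ≫ φ (∐ A') B := by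
            rw [ι_comp_sigmaComparison_assoc]; rfl
        _ = φ (A' i) B ≫ (F.map (Limits.Sigma.ι A' i) ▷ F.obj B) := hc₁ _
        _ = Limits.Sigma.ι (fun i => K₁.obj (A' i)) i ≫
              sm ≫ sigmaComparison K₂ A' := by
            rw [show sm = Limits.Sigma.map (f := fun i => K₁.obj (A' i))
              (g := fun i => K₂.obj (A' i)) (fun i => φ (A' i) B) from rfl]
            rw [Sigma.ι_map_assoc, ι_comp_sigmaComparison]
            rfl
    have h2 : φ (∐ A') B = inv (sigmaComparison K₁ A') ≫ sm ≫ sigmaComparison K₂ A' := by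
      rw [← hsq, IsIso.inv_hom_id_assoc]
    rw [h2]
    haveI : IsIso sm := by
      rw [show sm = Limits.Sigma.map (f := fun i => K₁.obj (A' i))
        (g := fun i => K₂.obj (A' i)) (fun i => φ (A' i) B) from rfl]
      infer_instance
    infer_instance
  · -- triangles
    intro T hT h1 h2
    let K₁ : C ⥤ D := tensorRight B ⋙ F
    let K₂ : C ⥤ D := F ⋙ tensorRight (F.obj B)
    let ψ : K₁.mapTriangle.obj T ⟶ K₂.mapTriangle.obj T :=
      { hom₁ := φ T.obj₁ B
        hom₂ := φ T.obj₂ B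
        hom₃ := φ T.obj₃ B
        comm₁ := hc₁ T.mor₁
        comm₂ := hc₁ T.mor₂
        comm₃ := by
          show (K₁.map T.mor₃ ≫ (K₁.commShiftIso (1 : ℤ)).hom.app T.obj₁) ≫
              (φ T.obj₁ B)⟦(1 : ℤ)⟧' =
            φ T.obj₃ B ≫ (K₂.map T.mor₃ ≫ (K₂.commShiftIso (1 : ℤ)).hom.app T.obj₁)
          rw [Functor.commShiftIso_comp_hom_app, Functor.commShiftIso_comp_hom_app]
          have hs := hφ_shift₁ (1 : ℤ) T.obj₁ B
          simp only [K₁, K₂, Functor.comp_obj, Functor.comp_map, Functor.flip_obj_map, curriedTensor_map_app,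
            Functor.flip_obj_obj, curriedTensor_obj_obj, Category.assoc]
          rw [← hs]
          rw [← Category.assoc, hc₁ T.mor₃, Category.assoc] }
    exact Pretriangulated.isIso₃_of_isIso₁₂ ψ (K₁.map_distinguished T hT)
      (K₂.map_distinguished T hT) h1 h2
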